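/- Let γ : [0,1] → ℝ³ be a piecewise C¹ curve such that γ'(t) is spacelike or zero for all t (with respect to Q(v) = v₁² + v₂² − v₃²), and suppose the orthogonal projection π(γ(t)) = (γ₁(t), γ₂(t)) onto the plane {x₃ = 0} is injective and has image contained in a Euclidean segment. Then for t₁ ≠ t₂ with π(γ(t₁)) ≠ π(γ(t₂)), the vector γ(t₁) − γ(t₂) is spacelike: Q(γ(t₁) − γ(t₂)) > 0. -/

import Mathlib

/-- Minkowski quadratic form on ℝ³. -/
noncomputable def QL (p : ℝ × ℝ × ℝ) : ℝ := p.1 ^ 2 + p.2.1 ^ 2 - p.2.2 ^ 2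

private lemma deriv_nonneg_of_monotoneOn_aux {f : ℝ → ℝ} {f' x a b : ℝ}
    (hx : x ∈ Set.Ioo a b) (hm : MonotoneOn f (Set.Ioo a b)) (hd : HasDerivAt f f' x) :
    0 ≤ f' := by
  have h := hasDerivAt_iff_tendsto_slope.1 hd
  have h2 : Filter.Tendsto (slope f x) (nhdsWithin x (Set.Ioi x)) (nhds f') :=
    h.mono_left (nhdsWithin_mono x fun y hy => ne_of_gt hy)
  refine ge_of_tendsto h2 ?_
  filter_upwards [Ioo_mem_nhdsGT_of_mem ⟨le_rfl, hx.2⟩] with y hy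
  rw [slope_def_field]
  have h3 : f x ≤ f y := hm hx ⟨hx.1.trans hy.1, hy.2⟩ hy.1.le
  have h4 : x < y := hy.1
  exact div_nonneg (by linarith) (by linarith)

private lemma aux_chord {a z a' z' : ℝ → ℝ} {s₂ s₁ : ℝ}
    (hs₂ : s₂ ∈ Set.Icc (0:ℝ) 1) (hs₁ : s₁ ∈ Set.Icc (0:ℝ) 1) (h21 : s₂ < s₁)
    (haD : ∀ t ∈ Set.Icc (0:ℝ) 1, HasDerivAt a (a' t) t)
    (hzD : ∀ t ∈ Set.Icc (0:ℝ) 1, HasDerivAt z (z' t) t)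
    (hmono : StrictMonoOn a (Set.Icc 0 1))
    (hb : ∀ t ∈ Set.Ioo s₂ s₁, |z' t| ≤ |a' t| ∧ (a' t ≠ 0 → |z' t| < |a' t|)) :
    |z s₁ - z s₂| < a s₁ - a s₂ := by
  have hsub : Set.Icc s₂ s₁ ⊆ Set.Icc 0 1 := Set.Icc_subset_Icc hs₂.1 hs₁.2
  have hsubo : Set.Ioo s₂ s₁ ⊆ Set.Ioo 0 1 := fun t ht =>
    ⟨lt_of_le_of_lt hs₂.1 ht.1, lt_of_lt_of_le ht.2 hs₁.2⟩
  have hmemIcc : ∀ t ∈ Set.Ioo s₂ s₁, t ∈ Set.Icc (0:ℝ) 1 := fun t ht =>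
    hsub (Set.Ioo_subset_Icc_self ht)
  have hanonneg : ∀ t ∈ Set.Ioo s₂ s₁, 0 ≤ a' t := fun t ht =>
    deriv_nonneg_of_monotoneOn_aux (hsubo ht)
      (hmono.monotoneOn.mono Set.Ioo_subset_Icc_self) (haD t (hmemIcc t ht))
  have hmem2 : s₂ ∈ Set.Icc s₂ s₁ := ⟨le_rfl, h21.le⟩
  have hmem1 : s₁ ∈ Set.Icc s₂ s₁ := ⟨h21.le, le_rfl⟩
  have hgm : MonotoneOn (fun t => a t - z t) (Set.Icc s₂ s₁) := by
    apply monotoneOn_of_hasDerivWithinAt_nonneg (convex_Icc _ _)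
      (f' := fun t => a' t - z' t)
    · exact fun t ht => (((haD t (hsub ht)).sub (hzD t (hsub ht))).continuousAt).continuousWithinAt
    · intro t ht
      rw [interior_Icc] at ht ⊢
      exact (((haD t (hmemIcc t ht)).sub (hzD t (hmemIcc t ht)))).hasDerivWithinAt
    · intro t ht
      rw [interior_Icc] at ht
      have h1 := (hb t ht).1
      have h2 := hanonneg t ht
      have := abs_le.1 (h1.trans_eq (abs_of_nonneg h2))
      linarith [this.2]
  have hhm : MonotoneOn (fun t => a t + z t) (Set.Icc s₂ s₁) := by
    apply monotoneOn_of_hasDerivWithinAt_nonneg (convex_Icc _ _)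
      (f' := fun t => a' t + z' t)
    · exact fun t ht => (((haD t (hsub ht)).add (hzD t (hsub ht))).continuousAt).continuousWithinAt
    · intro t ht
      rw [interior_Icc] at ht ⊢
      exact (((haD t (hmemIcc t ht)).add (hzD t (hmemIcc t ht)))).hasDerivWithinAt
    · intro t ht
      rw [interior_Icc] at ht
      have h1 := (hb t ht).1
      have h2 := hanonneg t ht
      have := abs_le.1 (h1.trans_eq (abs_of_nonneg h2))
      linarith [this.1]
  have hg : a s₂ - z s₂ ≤ a s₁ - z s₁ := hgm hmem2 hmem1 h21.le
  have hh : a s₂ + z s₂ ≤ a s₁ + z s₁ := hhm hmem2 hmem1 h21.le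
  have halt : a s₂ < a s₁ := hmono (hsub hmem2) (hsub hmem1) h21
  by_contra hcon
  push_neg at hcon
  have hle : |z s₁ - z s₂| ≤ a s₁ - a s₂ := abs_sub_le_iff.2 ⟨by linarith, by linarith⟩
  have heq : |z s₁ - z s₂| = a s₁ - a s₂ := le_antisymm hle hcon
  have key : ∀ (σ : ℝ), σ = 1 ∨ σ = -1 →
      a s₁ + σ * z s₁ = a s₂ + σ * z s₂ → False := by
    intro σ hσ hconsteq
    have hm' : MonotoneOn (fun t => a t + σ * z t) (Set.Icc s₂ s₁) := by
      rcases hσ with h | h <;> subst h <;> simp only [one_mul, neg_one_mul]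
      · exact hhm
      · exact fun x hx y hy hxy => by
          have := hgm hx hy hxy; simp only [sub_eq_add_neg] at this ⊢; linarith
    have hconst : ∀ t ∈ Set.Icc s₂ s₁, a t + σ * z t = a s₂ + σ * z s₂ := fun t ht =>
      le_antisymm (le_of_le_of_eq (hm' ht hmem1 ht.2) hconsteq) (hm' hmem2 ht ht.1)
    have hzero : ∀ t ∈ Set.Ioo s₂ s₁, a' t = 0 := by
      intro t ht
      have hev : (fun s => a s + σ * z s) =ᶠ[nhds t] fun _ => a s₂ + σ * z s₂ :=
        Filter.eventuallyEq_of_mem (isOpen_Ioo.mem_nhds ht)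
          fun s hs => hconst s (Set.Ioo_subset_Icc_self hs)
      have h0 : HasDerivAt (fun s => a s + σ * z s) 0 t :=
        (hasDerivAt_const t (a s₂ + σ * z s₂)).congr_of_eventuallyEq hev
      have hd : HasDerivAt (fun s => a s + σ * z s) (a' t + σ * z' t) t :=
        (haD t (hmemIcc t ht)).add ((hzD t (hmemIcc t ht)).const_mul σ)
      have hsum : a' t + σ * z' t = 0 := hd.unique h0
      by_contra hne
      have hlt := (hb t ht).2 hne
      have hσabs : |σ| = 1 := by rcases hσ with h | h <;> simp [h]
      have : |a' t| = |σ * z' t| := by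
        rw [show a' t = -(σ * z' t) by linarith, abs_neg]
      rw [abs_mul, hσabs, one_mul] at this
      linarith [hlt, this.ge, this.le]
    have haa : AntitoneOn a (Set.Icc s₂ s₁) := by
      apply antitoneOn_of_hasDerivWithinAt_nonpos (convex_Icc _ _) (f' := a')
      · exact fun t ht => ((haD t (hsub ht)).continuousAt).continuousWithinAt
      · intro t ht
        rw [interior_Icc] at ht ⊢
        exact (haD t (hmemIcc t ht)).hasDerivWithinAt
      · intro t ht
        rw [interior_Icc] at ht
        exact le_of_eq (hzero t ht)
    have := haa hmem2 hmem1 h21.le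
    linarith
  rcases abs_cases (z s₁ - z s₂) with ⟨he, _⟩ | ⟨he, _⟩
  · exact key (-1) (Or.inr rfl) (by rw [he] at heq; linarith)
  · exact key 1 (Or.inl rfl) (by rw [he] at heq; linarith)

set_option maxHeartbeats 1000000

/-- a (piecewise) C¹ curve in Minkowski ℝ³ with spacelike-or-zero
velocity whose projection to `{x₃ = 0}` is injective with image in a Euclidean
segment has spacelike chords: `Q(γ(t₁) − γ(t₂)) > 0` whenever the projections
of `γ(t₁)` and `γ(t₂)` differ. -/
theorem radial_spacelike_curve_has_spacelike_chords (γ γ' : ℝ → ℝ × ℝ × ℝ)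
    (hderiv : ∀ t ∈ Set.Icc (0:ℝ) 1, HasDerivAt γ (γ' t) t)
    (hspace : ∀ t ∈ Set.Icc (0:ℝ) 1, γ' t = 0 ∨ 0 < QL (γ' t))
    (hinj : Set.InjOn (fun t => ((γ t).1, (γ t).2.1)) (Set.Icc 0 1))
    (hseg : ∃ u v : ℝ × ℝ, ∀ t ∈ Set.Icc (0:ℝ) 1, ((γ t).1, (γ t).2.1) ∈ segment ℝ u v) :
    ∀ t₁ ∈ Set.Icc (0:ℝ) 1, ∀ t₂ ∈ Set.Icc (0:ℝ) 1,
      ((γ t₁).1, (γ t₁).2.1) ≠ ((γ t₂).1, (γ t₂).2.1) → 0 < QL (γ t₁ - γ t₂) := by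
  intro t₁ ht₁ t₂ ht₂ hne
  obtain ⟨u, v, hseg⟩ := hseg
  -- component derivatives
  have hd1 : ∀ t ∈ Set.Icc (0:ℝ) 1, HasDerivAt (fun s => (γ s).1) ((γ' t).1) t := fun t ht => by
    exact ((ContinuousLinearMap.fst ℝ ℝ (ℝ × ℝ)).hasFDerivAt).comp_hasDerivAt t (hderiv t ht)
  have hd2 : ∀ t ∈ Set.Icc (0:ℝ) 1, HasDerivAt (fun s => (γ s).2.1) ((γ' t).2.1) t := fun t ht => by
    exact (((ContinuousLinearMap.fst ℝ ℝ ℝ).comp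
      (ContinuousLinearMap.snd ℝ ℝ (ℝ × ℝ))).hasFDerivAt).comp_hasDerivAt t (hderiv t ht)
  have hd3 : ∀ t ∈ Set.Icc (0:ℝ) 1, HasDerivAt (fun s => (γ s).2.2) ((γ' t).2.2) t := fun t ht => by
    exact (((ContinuousLinearMap.snd ℝ ℝ ℝ).comp
      (ContinuousLinearMap.snd ℝ ℝ (ℝ × ℝ))).hasFDerivAt).comp_hasDerivAt t (hderiv t ht)
  set e₁ : ℝ := v.1 - u.1 with he₁
  set e₂ : ℝ := v.2 - u.2 with he₂
  have hcex : ∀ t ∈ Set.Icc (0:ℝ) 1, ∃ c : ℝ,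
      (γ t).1 = u.1 + c * e₁ ∧ (γ t).2.1 = u.2 + c * e₂ := by
    intro t ht
    have h := hseg t ht
    rw [segment_eq_image'] at h
    obtain ⟨θ, _, hθ⟩ := h
    refine ⟨θ, ?_, ?_⟩
    · have := congrArg Prod.fst hθ
      simp only [Prod.fst_add, Prod.fst_sub, Prod.smul_fst, smul_eq_mul] at this
      rw [← this]
    · have := congrArg Prod.snd hθ
      simp only [Prod.snd_add, Prod.snd_sub, Prod.smul_snd, smul_eq_mul] at this
      rw [← this]
  have hEpos : 0 < e₁ ^ 2 + e₂ ^ 2 := by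
    rcases eq_or_lt_of_le (by positivity : (0:ℝ) ≤ e₁ ^ 2 + e₂ ^ 2) with hE | hE
    · exfalso
      have h1 : e₁ = 0 := by nlinarith [sq_nonneg e₁, sq_nonneg e₂]
      have h2 : e₂ = 0 := by nlinarith [sq_nonneg e₁, sq_nonneg e₂]
      obtain ⟨c₁, hc₁, hc₁'⟩ := hcex t₁ ht₁
      obtain ⟨c₂, hc₂, hc₂'⟩ := hcex t₂ ht₂
      exact hne (by rw [Prod.mk.injEq, hc₁, hc₁', hc₂, hc₂', h1, h2]; norm_num)
    · exact hE
  set L : ℝ := Real.sqrt (e₁ ^ 2 + e₂ ^ 2) with hLdef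
  have hL : 0 < L := Real.sqrt_pos.2 hEpos
  have hL2 : L ^ 2 = e₁ ^ 2 + e₂ ^ 2 := Real.sq_sqrt hEpos.le
  set a : ℝ → ℝ := fun t => (((γ t).1 - u.1) * e₁ + ((γ t).2.1 - u.2) * e₂) / L with hadef
  set A : ℝ → ℝ := fun t => ((γ' t).1 * e₁ + (γ' t).2.1 * e₂) / L with hAdef
  have haD : ∀ t ∈ Set.Icc (0:ℝ) 1, HasDerivAt a (A t) t := fun t ht =>
    ((((hd1 t ht).sub_const u.1).mul_const e₁).add
      (((hd2 t ht).sub_const u.2).mul_const e₂)).div_const L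
  have hsqkey : ∀ x y : ℝ, (x / L * e₁) ^ 2 + (x / L * e₂) ^ 2 = x ^ 2 := by
    intro x y
    calc (x / L * e₁) ^ 2 + (x / L * e₂) ^ 2 = x ^ 2 / L ^ 2 * (e₁ ^ 2 + e₂ ^ 2) := by ring
      _ = x ^ 2 / L ^ 2 * L ^ 2 := by rw [hL2]
      _ = x ^ 2 := div_mul_cancel₀ _ (by positivity)
  have hrep : ∀ t ∈ Set.Icc (0:ℝ) 1,
      (γ t).1 = u.1 + a t / L * e₁ ∧ (γ t).2.1 = u.2 + a t / L * e₂ := by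
    intro t ht
    obtain ⟨c, h1, h2⟩ := hcex t ht
    have ha : a t = c * L := by
      rw [hadef]
      simp only
      rw [h1, h2]
      field_simp
      linear_combination (-c) * hL2
    have hcl : a t / L = c := by rw [ha, mul_div_cancel_right₀ c hL.ne']
    exact ⟨by rw [h1, hcl], by rw [h2, hcl]⟩
  have hainj : Set.InjOn a (Set.Icc 0 1) := by
    intro s hs t ht hst
    apply hinj hs ht
    obtain ⟨hs1, hs2⟩ := hrep s hs
    obtain ⟨ht1, ht2⟩ := hrep t ht
    simp only [Prod.mk.injEq]
    rw [hs1, hs2, ht1, ht2, hst]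
    exact ⟨rfl, rfl⟩
  have hacont : ContinuousOn a (Set.Icc 0 1) := fun t ht =>
    ((haD t ht).continuousAt).continuousWithinAt
  -- pointwise bound on the open interval
  have hb : ∀ t ∈ Set.Ioo (0:ℝ) 1,
      |(γ' t).2.2| ≤ |A t| ∧ (A t ≠ 0 → |(γ' t).2.2| < |A t|) := by
    intro t ht
    have htI : t ∈ Set.Icc (0:ℝ) 1 := Set.Ioo_subset_Icc_self ht
    have hev1 : (fun s => (γ s).1) =ᶠ[nhds t] (fun s => u.1 + a s / L * e₁) :=
      Filter.eventuallyEq_of_mem (isOpen_Ioo.mem_nhds ht)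
        fun s hs => (hrep s (Set.Ioo_subset_Icc_self hs)).1
    have hev2 : (fun s => (γ s).2.1) =ᶠ[nhds t] (fun s => u.2 + a s / L * e₂) :=
      Filter.eventuallyEq_of_mem (isOpen_Ioo.mem_nhds ht)
        fun s hs => (hrep s (Set.Ioo_subset_Icc_self hs)).2
    have hA1 : HasDerivAt (fun s => u.1 + a s / L * e₁) (A t / L * e₁) t :=
      (((haD t htI).div_const L).mul_const e₁).const_add u.1
    have hA2 : HasDerivAt (fun s => u.2 + a s / L * e₂) (A t / L * e₂) t :=
      (((haD t htI).div_const L).mul_const e₂).const_add u.2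
    have hg1 : (γ' t).1 = A t / L * e₁ :=
      (hd1 t htI).unique (hA1.congr_of_eventuallyEq hev1)
    have hg2 : (γ' t).2.1 = A t / L * e₂ :=
      (hd2 t htI).unique (hA2.congr_of_eventuallyEq hev2)
    have hsq : (γ' t).1 ^ 2 + (γ' t).2.1 ^ 2 = A t ^ 2 := by
      rw [hg1, hg2]; exact hsqkey (A t) 0
    rcases hspace t htI with h0 | hQ
    · have h01 : (γ' t).2.2 = 0 := by rw [h0]; rfl
      have h02 : A t = 0 := by rw [hAdef]; simp only; rw [h0]; simp
      rw [h01, h02]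
      simp
    · simp only [QL] at hQ
      have hlt : |(γ' t).2.2| < |A t| := by
        nlinarith [sq_abs ((γ' t).2.2), sq_abs (A t), abs_nonneg ((γ' t).2.2), abs_nonneg (A t)]
      exact ⟨hlt.le, fun _ => hlt⟩
  -- the key chord estimate
  have hkey : |(γ t₁).2.2 - (γ t₂).2.2| < |a t₁ - a t₂| := by
    rcases ContinuousOn.strictMonoOn_of_injOn_Icc' zero_le_one hacont hainj with hmon | hant
    · rcases lt_trichotomy t₁ t₂ with h | h | h
      · have := aux_chord ht₁ ht₂ h haD hd3 hmon
          (fun t htt => hb t ⟨lt_of_le_of_lt ht₁.1 htt.1, lt_of_lt_of_le htt.2 ht₂.2⟩)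
        calc |(γ t₁).2.2 - (γ t₂).2.2| = |(γ t₂).2.2 - (γ t₁).2.2| := abs_sub_comm _ _
          _ < a t₂ - a t₁ := this
          _ ≤ |a t₂ - a t₁| := le_abs_self _
          _ = |a t₁ - a t₂| := abs_sub_comm _ _
      · exact absurd (by rw [h]) hne
      · have := aux_chord ht₂ ht₁ h haD hd3 hmon
          (fun t htt => hb t ⟨lt_of_le_of_lt ht₂.1 htt.1, lt_of_lt_of_le htt.2 ht₁.2⟩)
        exact lt_of_lt_of_le this (le_abs_self _)
    · have hmon : StrictMonoOn (fun t => -a t) (Set.Icc (0:ℝ) 1) :=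
        fun x hx y hy hxy => neg_lt_neg (hant hx hy hxy)
      have haD' : ∀ t ∈ Set.Icc (0:ℝ) 1, HasDerivAt (fun t => -a t) (-A t) t :=
        fun t ht => (haD t ht).neg
      have hb' : ∀ t ∈ Set.Ioo (0:ℝ) 1,
          |(γ' t).2.2| ≤ |-A t| ∧ (-A t ≠ 0 → |(γ' t).2.2| < |-A t|) := by
        intro t ht
        rw [abs_neg, neg_ne_zero]
        exact hb t ht
      rcases lt_trichotomy t₁ t₂ with h | h | h
      · have := aux_chord ht₁ ht₂ h haD' hd3 hmon
          (fun t htt => hb' t ⟨lt_of_le_of_lt ht₁.1 htt.1, lt_of_lt_of_le htt.2 ht₂.2⟩)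
        calc |(γ t₁).2.2 - (γ t₂).2.2| = |(γ t₂).2.2 - (γ t₁).2.2| := abs_sub_comm _ _
          _ < -a t₂ - -a t₁ := this
          _ ≤ |a t₁ - a t₂| := by rw [abs_sub_comm]; linarith [le_abs_self (a t₁ - a t₂), abs_sub_comm (a t₁) (a t₂)]
      · exact absurd (by rw [h]) hne
      · have := aux_chord ht₂ ht₁ h haD' hd3 hmon
          (fun t htt => hb' t ⟨lt_of_le_of_lt ht₂.1 htt.1, lt_of_lt_of_le htt.2 ht₁.2⟩)
        calc |(γ t₁).2.2 - (γ t₂).2.2| < -a t₁ - -a t₂ := this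
          _ ≤ |a t₁ - a t₂| := by linarith [le_abs_self (a t₂ - a t₁), abs_sub_comm (a t₂) (a t₁)]
  -- conclude
  obtain ⟨h11, h12⟩ := hrep t₁ ht₁
  obtain ⟨h21, h22⟩ := hrep t₂ ht₂
  have hQeq : QL (γ t₁ - γ t₂) =
      (a t₁ - a t₂) ^ 2 - ((γ t₁).2.2 - (γ t₂).2.2) ^ 2 := by
    simp only [QL, Prod.fst_sub, Prod.snd_sub]
    rw [h11, h12, h21, h22]
    have := hsqkey (a t₁ - a t₂) 0
    linear_combination this
  rw [hQeq]
  nlinarith [hkey, sq_abs ((γ t₁).2.2 - (γ t₂).2.2), sq_abs (a t₁ - a t₂),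
    abs_nonneg ((γ t₁).2.2 - (γ t₂).2.2), abs_nonneg (a t₁ - a t₂)]
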